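/- Let A be a real M×N matrix such that AA* is invertible, and let γ_m(A) denote its preconditioned restricted isometry constant of order m. Let v ∈ ℝ^N with supp(v) = T″, |T″| ≤ t, and let T′ be an index set with |T′| ≤ s and T′ ∩ T″ = ∅. Then ‖[A*(AA*)⁻¹Av]_{T′}‖₂ ≤ γ_{s+t}(A) · ‖v‖₂. -/

import Mathlib

open Matrix

/-- The Euclidean (ℓ²) norm of a vector in ℝⁿ. -/
noncomputable def norm2 {n : ℕ} (x : Fin n → ℝ) : ℝ := Real.sqrt (∑ i, x i ^ 2)

/-- `x` is `s`-sparse: it has at most `s` nonzero entries. -/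
def sparse {n : ℕ} (s : ℕ) (x : Fin n → ℝ) : Prop :=
  (Finset.univ.filter fun i => x i ≠ 0).card ≤ s

/-- `restrict T x` is the vector agreeing with `x` on `T` and zero outside `T`. -/
def restrict {n : ℕ} (T : Finset (Fin n)) (x : Fin n → ℝ) : Fin n → ℝ :=
  fun i => if i ∈ T then x i else 0

/-- The preconditioned matrix `(AAᴴ)^{-1/2} A`, where `(AAᴴ)^{-1/2}` is the inverse of the
positive semidefinite square root of `AAᴴ`. -/
noncomputable def precond {M N : ℕ} (A : Matrix (Fin M) (Fin N) ℝ) :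
    Matrix (Fin M) (Fin N) ℝ :=
  ((Matrix.posSemidef_self_mul_conjTranspose A).1.eigenvectorUnitary.1 *
    diagonal ((↑) ∘ (√·) ∘ (Matrix.posSemidef_self_mul_conjTranspose A).1.eigenvalues) *
    (star (Matrix.posSemidef_self_mul_conjTranspose A).1.eigenvectorUnitary :
      Matrix (Fin M) (Fin M) ℝ) : Matrix (Fin M) (Fin M) ℝ)⁻¹ * A

/-- The preconditioned restricted isometry constant `γ_s(A)`: the smallest `γ ≥ 0` such that
`(1-γ)‖x‖₂² ≤ ‖(AAᴴ)^{-1/2}Ax‖₂²` for all `s`-sparse `x`. -/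
noncomputable def pripConst {M N : ℕ} (A : Matrix (Fin M) (Fin N) ℝ) (s : ℕ) : ℝ :=
  sInf {γ : ℝ | 0 ≤ γ ∧ ∀ x : Fin N → ℝ, sparse s x →
    (1 - γ) * norm2 x ^ 2 ≤ norm2 ((precond A).mulVec x) ^ 2}

/-- The restricted isometry constant `δ_s(B)`: the smallest `δ ≥ 0` such that
`(1-δ)‖x‖₂² ≤ ‖Bx‖₂² ≤ (1+δ)‖x‖₂²` for all `s`-sparse `x`. -/
noncomputable def ripConst {m n : ℕ} (B : Matrix (Fin m) (Fin n) ℝ) (s : ℕ) : ℝ :=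
  sInf {δ : ℝ | 0 ≤ δ ∧ ∀ x : Fin n → ℝ, sparse s x →
    (1 - δ) * norm2 x ^ 2 ≤ norm2 (B.mulVec x) ^ 2 ∧
      norm2 (B.mulVec x) ^ 2 ≤ (1 + δ) * norm2 x ^ 2}

/-- `θ_t(A) = δ_t((AAᴴ)⁻¹A)`. -/
noncomputable def thetaConst {M N : ℕ} (A : Matrix (Fin M) (Fin N) ℝ) (t : ℕ) : ℝ :=
  ripConst ((A * Aᴴ)⁻¹ * A) t

lemma norm2_sq {n : ℕ} (x : Fin n → ℝ) : norm2 x ^ 2 = x ⬝ᵥ x := by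
  rw [norm2, Real.sq_sqrt (Finset.sum_nonneg fun i _ => sq_nonneg _)]
  simp [dotProduct, sq]

lemma norm2_nonneg {n : ℕ} (x : Fin n → ℝ) : 0 ≤ norm2 x := Real.sqrt_nonneg _

lemma dot_self_nonneg {n : ℕ} (x : Fin n → ℝ) : 0 ≤ x ⬝ᵥ x :=
  Finset.sum_nonneg fun i _ => mul_self_nonneg _

lemma dot_self_eq_zero' {n : ℕ} {x : Fin n → ℝ} (h : x ⬝ᵥ x = 0) : x = 0 := by
  have h' : ∑ i, x i * x i = 0 := h
  funext i
  have := (Finset.sum_eq_zero_iff_of_nonneg (fun j _ => mul_self_nonneg (x j))).mp h'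
  exact mul_self_eq_zero.mp (this i (Finset.mem_univ i))

lemma dot_conjT {m n : ℕ} (B : Matrix (Fin m) (Fin n) ℝ) (x : Fin n → ℝ) (y : Fin m → ℝ) :
    x ⬝ᵥ (Bᴴ *ᵥ y) = (B *ᵥ x) ⬝ᵥ y := by
  rw [dotProduct_mulVec, vecMul_conjTranspose]
  simp

lemma precond_form {M N : ℕ} (A : Matrix (Fin M) (Fin N) ℝ) (x : Fin N → ℝ) :
    norm2 ((precond A).mulVec x) ^ 2 = x ⬝ᵥ ((Aᴴ * (A * Aᴴ)⁻¹ * A) *ᵥ x) := by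
  have key : (precond A)ᴴ * precond A = Aᴴ * (A * Aᴴ)⁻¹ * A := by
    set h := Matrix.posSemidef_self_mul_conjTranspose A
    set U : Matrix (Fin M) (Fin M) ℝ := h.1.eigenvectorUnitary.1 with hU
    set D : Matrix (Fin M) (Fin M) ℝ := diagonal ((↑) ∘ (√·) ∘ h.1.eigenvalues) with hD
    set Sq : Matrix (Fin M) (Fin M) ℝ := U * D * star U with hSq
    have hUU : star U * U = 1 := Unitary.star_mul_self_of_mem h.1.eigenvectorUnitary.2
    have hDD : D * D = diagonal ((↑) ∘ h.1.eigenvalues) := by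
      rw [hD, diagonal_mul_diagonal]
      congr 1
      funext i
      simp
      exact Real.mul_self_sqrt (h.eigenvalues_nonneg i)
    have hS : Sq * Sq = A * Aᴴ := by
      have hs := h.1.spectral_theorem
      rw [Unitary.conjStarAlgAut_apply] at hs
      calc Sq * Sq = U * (D * (star U * U) * D) * star U := by
            simp only [hSq, Matrix.mul_assoc]
        _ = A * Aᴴ := by rw [hUU, Matrix.mul_one, hDD]; exact hs.symm
    have hherm : Sqᴴ = Sq := by
      rw [hSq, conjTranspose_mul, conjTranspose_mul]
      simp only [star_eq_conjTranspose, conjTranspose_conjTranspose, hD, diagonal_conjTranspose,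
        Matrix.mul_assoc]
      rw [star_trivial]
    have h2 : Sq⁻¹ᴴ * Sq⁻¹ = (A * Aᴴ)⁻¹ := by
      rw [conjTranspose_nonsing_inv, hherm, ← Matrix.mul_inv_rev, hS]
    rw [precond, ← hSq, conjTranspose_mul, Matrix.mul_assoc, ← Matrix.mul_assoc (Sq⁻¹ᴴ), h2]
    simp only [Matrix.mul_assoc]
  rw [norm2_sq, ← key, ← Matrix.mulVec_mulVec, dot_conjT]

lemma sparse_mono {n : ℕ} {s s' : ℕ} {x : Fin n → ℝ} (h : s ≤ s') (hx : sparse s x) :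
    sparse s' x := le_trans hx h

lemma sparse_restrict {n : ℕ} (T : Finset (Fin n)) (x : Fin n → ℝ) (s : ℕ) (h : T.card ≤ s) :
    sparse s (restrict T x) := by
  refine le_trans (Finset.card_le_card ?_) h
  intro i hi
  simp only [Finset.mem_filter, restrict] at hi
  by_contra hc
  simp [hc] at hi

lemma sparse_smul {n : ℕ} {s : ℕ} {x : Fin n → ℝ} (c : ℝ) (hx : sparse s x) :
    sparse s (c • x) := by
  refine le_trans (Finset.card_le_card ?_) hx
  intro i hi
  simp only [Finset.mem_filter, Finset.mem_univ, true_and, Pi.smul_apply, smul_eq_mul] at hi ⊢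
  intro h0
  simp [h0] at hi

lemma sparse_add {n : ℕ} {s t : ℕ} {x y : Fin n → ℝ} (hx : sparse s x) (hy : sparse t y) :
    sparse (s + t) (x + y) := by
  refine le_trans (le_trans (Finset.card_le_card ?_) (Finset.card_union_le _ _))
    (add_le_add hx hy)
  intro i hi
  simp only [Finset.mem_filter, Finset.mem_union, Finset.mem_univ, true_and,
    Pi.add_apply] at hi ⊢
  by_contra hc
  push_neg at hc
  simp [hc.1, hc.2] at hi

theorem stmt3 {M N : ℕ} (A : Matrix (Fin M) (Fin N) ℝ) (hA : IsUnit (A * Aᴴ).det)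
    (s t : ℕ) (v : Fin N → ℝ) (T' T'' : Finset (Fin N))
    (hv : ∀ i, v i ≠ 0 ↔ i ∈ T'')
    (hT' : T'.card ≤ s) (hT'' : T''.card ≤ t) (hdisj : Disjoint T' T'') :
    norm2 (restrict T' ((Aᴴ * (A * Aᴴ)⁻¹ * A).mulVec v)) ≤ pripConst A (s + t) * norm2 v := by
  set P := Aᴴ * (A * Aᴴ)⁻¹ * A with hP
  set u := restrict T' (P *ᵥ v) with hu
  have hPsymm : Pᴴ = P := by
    have h3 : (A * Aᴴ)⁻¹ᴴ = (A * Aᴴ)⁻¹ := by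
      rw [conjTranspose_nonsing_inv, conjTranspose_mul, conjTranspose_conjTranspose]
    rw [hP, conjTranspose_mul, conjTranspose_mul, conjTranspose_conjTranspose, h3,
      Matrix.mul_assoc]
  have hPP : P * P = P := by
    rw [hP]
    have h1 : (A * Aᴴ)⁻¹ * (A * Aᴴ) = 1 := Matrix.nonsing_inv_mul _ hA
    calc Aᴴ * (A * Aᴴ)⁻¹ * A * (Aᴴ * (A * Aᴴ)⁻¹ * A)
        = Aᴴ * (((A * Aᴴ)⁻¹ * (A * Aᴴ)) * ((A * Aᴴ)⁻¹ * A)) := by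
          simp only [Matrix.mul_assoc]
      _ = Aᴴ * (A * Aᴴ)⁻¹ * A := by rw [h1, Matrix.one_mul, Matrix.mul_assoc]
  have hform : ∀ x : Fin N → ℝ, norm2 ((precond A).mulVec x) ^ 2 = x ⬝ᵥ (P *ᵥ x) :=
    fun x => precond_form A x
  have hadj : ∀ x y : Fin N → ℝ, x ⬝ᵥ (P *ᵥ y) = (P *ᵥ x) ⬝ᵥ y := by
    intro x y
    conv_lhs => rw [← hPsymm]
    exact dot_conjT P x y
  have hsymmform : ∀ x y : Fin N → ℝ, x ⬝ᵥ (P *ᵥ y) = y ⬝ᵥ (P *ᵥ x) := by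
    intro x y
    rw [hadj, dotProduct_comm]
  have hcontr : ∀ x : Fin N → ℝ, x ⬝ᵥ (P *ᵥ x) ≤ x ⬝ᵥ x := by
    intro x
    have h0 : 0 ≤ (x - P *ᵥ x) ⬝ᵥ (x - P *ᵥ x) := dot_self_nonneg _
    have h1 : (P *ᵥ x) ⬝ᵥ (P *ᵥ x) = x ⬝ᵥ (P *ᵥ x) := by
      rw [← hadj, mulVec_mulVec, hPP]
    have h2 : (P *ᵥ x) ⬝ᵥ x = x ⬝ᵥ (P *ᵥ x) := dotProduct_comm _ _
    rw [sub_dotProduct, dotProduct_sub, dotProduct_sub, h1, h2] at h0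
    linarith
  have hu_sparse : sparse s u := sparse_restrict _ _ _ hT'
  have hv_sparse : sparse t v := by
    refine le_trans (Finset.card_le_card ?_) hT''
    intro i hi
    simp only [Finset.mem_filter, Finset.mem_univ, true_and] at hi
    exact (hv i).mp hi
  have huv : u ⬝ᵥ v = 0 := by
    apply Finset.sum_eq_zero
    intro i _
    by_cases h : i ∈ T'
    · have : v i = 0 := by
        by_contra hc
        exact (Finset.disjoint_left.mp hdisj h) ((hv i).mp hc)
      simp [this]
    · simp [hu, restrict, h]
  have huPv : u ⬝ᵥ (P *ᵥ v) = u ⬝ᵥ u := by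
    apply Finset.sum_congr rfl
    intro i _
    by_cases h : i ∈ T'
    · have : u i = (P *ᵥ v) i := by simp [hu, restrict, h]
      rw [← this]
    · have : u i = 0 := by simp [hu, restrict, h]
      simp [this]
  -- abbreviations
  set a := u ⬝ᵥ u with ha
  set b := v ⬝ᵥ v with hb
  have hna : norm2 u ^ 2 = a := norm2_sq u
  have hnb : norm2 v ^ 2 = b := norm2_sq v
  have ha0 : 0 ≤ a := dot_self_nonneg u
  have hb0 : 0 ≤ b := dot_self_nonneg v
  -- quadratic expansions
  have hq : ∀ d : ℝ, (v + d • u) ⬝ᵥ (P *ᵥ (v + d • u))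
      = v ⬝ᵥ (P *ᵥ v) + 2 * d * a + d ^ 2 * (u ⬝ᵥ (P *ᵥ u)) := by
    intro d
    rw [Matrix.mulVec_add, Matrix.mulVec_smul]
    rw [dotProduct_add, add_dotProduct, add_dotProduct, dotProduct_smul, dotProduct_smul,
      smul_dotProduct, smul_dotProduct, smul_eq_mul, smul_eq_mul, smul_eq_mul, smul_eq_mul]
    rw [hsymmform v u, huPv]
    ring
  have hd : ∀ d : ℝ, (v + d • u) ⬝ᵥ (v + d • u) = b + d ^ 2 * a := by
    intro d
    rw [dotProduct_add, add_dotProduct, add_dotProduct, dotProduct_smul, dotProduct_smul,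
      smul_dotProduct, smul_dotProduct, smul_eq_mul, smul_eq_mul, smul_eq_mul, smul_eq_mul,
      dotProduct_comm v u, huv]
    ring
  have hsp : ∀ d : ℝ, sparse (s + t) (v + d • u) := fun d =>
    sparse_mono (le_of_eq (Nat.add_comm t s)) (sparse_add hv_sparse (sparse_smul d hu_sparse))
  -- the set defining pripConst
  set S := {γ : ℝ | 0 ≤ γ ∧ ∀ x : Fin N → ℝ, sparse (s + t) x →
    (1 - γ) * norm2 x ^ 2 ≤ norm2 ((precond A).mulVec x) ^ 2} with hS
  have hSne : S.Nonempty := by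
    refine ⟨1, by norm_num, fun x _ => ?_⟩
    rw [sub_self, zero_mul]
    exact sq_nonneg _
  have hSbdd : BddBelow S := ⟨0, fun γ hγ => hγ.1⟩
  have hprip : pripConst A (s + t) = sInf S := rfl
  have hprip0 : 0 ≤ pripConst A (s + t) := by
    rw [hprip]; exact le_csInf hSne fun γ hγ => hγ.1
  -- key inequality for each γ ∈ S
  have hkey : ∀ γ ∈ S, norm2 u ≤ γ * norm2 v := by
    intro γ hγ
    obtain ⟨hγ0, hlow⟩ := hγ
    by_cases hav : a = 0
    · have : norm2 u = 0 := by
        rw [← Real.sqrt_sq (norm2_nonneg u), hna, hav, Real.sqrt_zero]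
      rw [this]
      exact mul_nonneg hγ0 (norm2_nonneg v)
    have hapos : 0 < a := lt_of_le_of_ne ha0 (Ne.symm hav)
    by_cases hbv : b = 0
    · exfalso
      have hv0 : v = 0 := dot_self_eq_zero' (by rw [← hb]; exact hbv)
      have : u = 0 := by
        funext i
        simp [hu, restrict, hv0]
      rw [ha, this] at hapos
      simp at hapos
    have hbpos : 0 < b := lt_of_le_of_ne hb0 (Ne.symm hbv)
    have hnu : 0 < norm2 u := by
      have := hna; nlinarith [norm2_nonneg u]
    have hnv : 0 < norm2 v := by
      have := hnb; nlinarith [norm2_nonneg v]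
    set c := norm2 v / norm2 u with hc
    have hcpos : 0 < c := div_pos hnv hnu
    -- lower bound at d = -c
    have h1 := hlow (v + (-c) • u) (hsp (-c))
    rw [hform, hq, norm2_sq, hd] at h1
    -- upper bound at d = c
    have h2 : norm2 ((precond A).mulVec (v + c • u)) ^ 2 ≤ b + c ^ 2 * a := by
      rw [hform, ← hd c]
      exact hcontr _
    rw [hform, hq] at h2
    -- combine: 4 c a ≤ γ (b + c² a)
    have hmain : 4 * c * a ≤ γ * (b + c ^ 2 * a) := by nlinarith
    have hca : c * a = norm2 v * norm2 u := by
      rw [hc, ← hna]; field_simp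
    have hc2a : c ^ 2 * a = b := by
      rw [hc, ← hna, ← hnb]; field_simp
    have h4 : 4 * (norm2 v * norm2 u) ≤ γ * (norm2 v ^ 2 + norm2 v ^ 2) := by
      calc 4 * (norm2 v * norm2 u) = 4 * c * a := by rw [← hca]; ring
        _ ≤ γ * (b + c ^ 2 * a) := hmain
        _ = γ * (norm2 v ^ 2 + norm2 v ^ 2) := by rw [hc2a, hnb]
    nlinarith [h4, mul_pos hnv hnu, hnv, hnu, hγ0]
  -- conclude
  by_cases hnv : norm2 v = 0
  · have hv0 : v = 0 := dot_self_eq_zero' (by rw [← hb, ← hnb, hnv]; ring)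
    have hu0 : u = 0 := by
      funext i
      simp [hu, restrict, hv0]
    rw [hu0, hnv]
    simp [norm2]
  · have hnvpos : 0 < norm2 v := lt_of_le_of_ne (norm2_nonneg v) (Ne.symm hnv)
    have hlb : norm2 u / norm2 v ≤ sInf S := by
      apply le_csInf hSne
      intro γ hγ
      rw [div_le_iff₀ hnvpos]
      exact hkey γ hγ
    rw [hprip]
    calc norm2 u = (norm2 u / norm2 v) * norm2 v := by field_simp
      _ ≤ sInf S * norm2 v := by
          exact mul_le_mul_of_nonneg_right hlb (le_of_lt hnvpos) |>.trans_eq rfl
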